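/- Let n, m, r be positive integers, L an n×r real matrix, F an m×r real matrix, e an n×m real matrix, and set W = L·Fᵀ + e. Then for every n×r real matrix U whose columns are orthonormal (UᵀU = I_r), one has tr(Uᵀ W Wᵀ U) ≤ ‖L Fᵀ‖_F² + r·‖e‖² + 2·√r·‖e‖·‖L Fᵀ‖_F. -/

import Mathlib

open Matrix

/-- Frobenius norm of a real matrix. -/
noncomputable def frobNorm {n m : ℕ} (A : Matrix (Fin n) (Fin m) ℝ) : ℝ :=
  Real.sqrt (∑ i, ∑ j, (A i j) ^ 2)

/-- Spectral (ℓ²→ℓ² operator) norm of a real matrix. -/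
noncomputable def specNorm {n m : ℕ} (A : Matrix (Fin n) (Fin m) ℝ) : ℝ :=
  ‖LinearMap.toContinuousLinearMap (Matrix.toEuclideanLin A)‖

lemma specNorm_nonneg {n m : ℕ} (A : Matrix (Fin n) (Fin m) ℝ) : 0 ≤ specNorm A :=
  norm_nonneg _

lemma frobNorm_nonneg {n m : ℕ} (A : Matrix (Fin n) (Fin m) ℝ) : 0 ≤ frobNorm A :=
  Real.sqrt_nonneg _

lemma sum_sq_nonneg' {n m : ℕ} (A : Matrix (Fin n) (Fin m) ℝ) :
    0 ≤ ∑ i, ∑ j, (A i j) ^ 2 :=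
  Finset.sum_nonneg fun _ _ => Finset.sum_nonneg fun _ _ => sq_nonneg _

lemma frobNorm_sq {n m : ℕ} (A : Matrix (Fin n) (Fin m) ℝ) :
    frobNorm A ^ 2 = ∑ i, ∑ j, (A i j) ^ 2 :=
  Real.sq_sqrt (sum_sq_nonneg' A)

/-- trace of B * Bᵀ is sum of squares of entries. -/
lemma trace_mul_transpose {n m : ℕ} (B : Matrix (Fin n) (Fin m) ℝ) :
    Matrix.trace (B * Bᵀ) = ∑ i, ∑ j, (B i j) ^ 2 := by
  simp [Matrix.trace, Matrix.mul_apply, Matrix.diag, sq]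

lemma trace_transpose_mul' {n m : ℕ} (B : Matrix (Fin n) (Fin m) ℝ) :
    Matrix.trace (Bᵀ * B) = ∑ i, ∑ j, (B i j) ^ 2 := by
  rw [← Matrix.trace_mul_comm, trace_mul_transpose]

noncomputable def frobVec {n m : ℕ} (A : Matrix (Fin n) (Fin m) ℝ) :
    EuclideanSpace ℝ (Fin n × Fin m) :=
  WithLp.toLp 2 (fun p : Fin n × Fin m => A p.1 p.2)

lemma frobNorm_eq_norm {n m : ℕ} (A : Matrix (Fin n) (Fin m) ℝ) :
    frobNorm A = ‖frobVec A‖ := by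
  rw [EuclideanSpace.norm_eq, frobNorm]
  congr 1
  rw [Fintype.sum_prod_type]
  simp [frobVec, sq_abs]

lemma frobNorm_add_le {n m : ℕ} (A B : Matrix (Fin n) (Fin m) ℝ) :
    frobNorm (A + B) ≤ frobNorm A + frobNorm B := by
  have h : frobVec (A + B) = frobVec A + frobVec B := rfl
  rw [frobNorm_eq_norm, frobNorm_eq_norm, frobNorm_eq_norm, h]
  exact norm_add_le _ _

lemma mulVec_norm_le {n m : ℕ} (A : Matrix (Fin n) (Fin m) ℝ) (v : Fin m → ℝ) :
    Real.sqrt (∑ i, (A.mulVec v i) ^ 2) ≤ specNorm A * Real.sqrt (∑ j, (v j) ^ 2) := by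
  have h := (LinearMap.toContinuousLinearMap (Matrix.toEuclideanLin A)).le_opNorm
    ((WithLp.equiv 2 (Fin m → ℝ)).symm v)
  rw [LinearMap.coe_toContinuousLinearMap'] at h
  rw [WithLp.equiv_symm_apply, Matrix.toEuclideanLin_apply_piLp_toLp] at h
  rw [EuclideanSpace.norm_eq, EuclideanSpace.norm_eq] at h
  simpa [specNorm, sq_abs] using h

theorem stmt0 (n m r : ℕ) (hn : 0 < n) (hm : 0 < m) (hr : 0 < r)
    (L : Matrix (Fin n) (Fin r) ℝ) (F : Matrix (Fin m) (Fin r) ℝ)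
    (e : Matrix (Fin n) (Fin m) ℝ) (W : Matrix (Fin n) (Fin m) ℝ)
    (hW : W = L * Fᵀ + e)
    (U : Matrix (Fin n) (Fin r) ℝ) (hU : Uᵀ * U = 1) :
    Matrix.trace (Uᵀ * W * Wᵀ * U) ≤
      frobNorm (L * Fᵀ) ^ 2 + (r : ℝ) * specNorm e ^ 2
        + 2 * Real.sqrt r * specNorm e * frobNorm (L * Fᵀ) := by
  set A := L * Fᵀ with hA
  clear_value A
  -- step 1 : trace equals frobNorm (Wᵀ * U) ^ 2
  have step1 : Matrix.trace (Uᵀ * W * Wᵀ * U) = frobNorm (Wᵀ * U) ^ 2 := by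
    rw [frobNorm_sq, ← trace_transpose_mul']
    rw [Matrix.transpose_mul, Matrix.transpose_transpose]
    rw [Matrix.mul_assoc, Matrix.mul_assoc]
  -- step 3 : frobNorm (Aᵀ * U) ≤ frobNorm A
  have step3 : frobNorm (Aᵀ * U) ≤ frobNorm A := by
    have hPP : (U * Uᵀ) * (U * Uᵀ) = U * Uᵀ := by
      rw [Matrix.mul_assoc, ← Matrix.mul_assoc Uᵀ U Uᵀ, hU, Matrix.one_mul]
    have key : frobNorm (Aᵀ * U) ^ 2 + (∑ i, ∑ j, ((A - U * Uᵀ * A) i j) ^ 2)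
        = frobNorm A ^ 2 := by
      rw [frobNorm_sq, frobNorm_sq, ← trace_transpose_mul', ← trace_mul_transpose,
        ← trace_mul_transpose]
      have h1 : (Aᵀ * U)ᵀ * (Aᵀ * U) = Uᵀ * A * (Aᵀ * U) := by
        rw [Matrix.transpose_mul, Matrix.transpose_transpose]
      rw [h1]
      have h2 : Matrix.trace (Uᵀ * A * (Aᵀ * U)) = Matrix.trace (U * Uᵀ * (A * Aᵀ)) := by
        rw [← Matrix.mul_assoc, Matrix.trace_mul_comm, ← Matrix.mul_assoc, ← Matrix.mul_assoc,
          Matrix.mul_assoc (U * Uᵀ)]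
      have h3 : (A - U * Uᵀ * A) * (A - U * Uᵀ * A)ᵀ
          = A * Aᵀ - U * Uᵀ * (A * Aᵀ) - (A * Aᵀ) * (U * Uᵀ)ᵀ
            + U * Uᵀ * (A * Aᵀ) * (U * Uᵀ)ᵀ := by
        rw [Matrix.transpose_sub, Matrix.transpose_mul]
        simp only [Matrix.sub_mul, Matrix.mul_sub, Matrix.mul_assoc]
        abel
      have hPt : (U * Uᵀ)ᵀ = U * Uᵀ := by
        rw [Matrix.transpose_mul, Matrix.transpose_transpose]
      have h4 : Matrix.trace ((A * Aᵀ) * (U * Uᵀ)) = Matrix.trace (U * Uᵀ * (A * Aᵀ)) :=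
        Matrix.trace_mul_comm _ _
      have h5 : Matrix.trace (U * Uᵀ * (A * Aᵀ) * (U * Uᵀ)) = Matrix.trace (U * Uᵀ * (A * Aᵀ)) := by
        rw [Matrix.trace_mul_comm, ← Matrix.mul_assoc, hPP]
      rw [h2, h3, hPt]
      simp only [Matrix.trace_add, Matrix.trace_sub, h4, h5]
      ring
    have hnn : 0 ≤ ∑ i, ∑ j, ((A - U * Uᵀ * A) i j) ^ 2 := sum_sq_nonneg' _
    have hsq : frobNorm (Aᵀ * U) ^ 2 ≤ frobNorm A ^ 2 := by linarith
    exact le_of_pow_le_pow_left₀ two_ne_zero (frobNorm_nonneg A) hsq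
  -- step 4 : frobNorm (eᵀ * U) ≤ √r * specNorm e
  have step4 : frobNorm (eᵀ * U) ≤ Real.sqrt r * specNorm e := by
    have col : ∀ j : Fin r, ∑ i, ((eᵀ * U) i j) ^ 2 ≤ specNorm e ^ 2 := by
      intro j
      set u : Fin n → ℝ := fun k => U k j with hu
      have hunorm : ∑ k, (u k) ^ 2 = 1 := by
        have := congrFun (congrFun hU j) j
        simpa [Matrix.mul_apply, Matrix.one_apply, sq, u] using this
      set v : Fin m → ℝ := fun i => eᵀ.mulVec u i with hv
      have hcol : ∀ i, (eᵀ * U) i j = v i := by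
        intro i; simp [Matrix.mul_apply, Matrix.mulVec, dotProduct, v, u]
      have hs : ∑ i, ((eᵀ * U) i j) ^ 2 = ∑ i, (v i) ^ 2 := by
        simp only [hcol]
      rw [hs]
      set s := ∑ i, (v i) ^ 2 with hsdef
      have hsnn : 0 ≤ s := Finset.sum_nonneg fun _ _ => sq_nonneg _
      have key : s = ∑ k, u k * (e.mulVec v) k := by
        calc s = ∑ i, (∑ k, e k i * u k) * v i := by
              apply Finset.sum_congr rfl; intro i _
              have hvi : v i = ∑ k, e k i * u k := by
                simp [hv, Matrix.mulVec, dotProduct, Matrix.transpose_apply]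
              rw [sq]
              exact congrArg (· * v i) hvi
          _ = ∑ i, ∑ k, u k * (e k i * v i) := by
              apply Finset.sum_congr rfl; intro i _
              rw [Finset.sum_mul]
              apply Finset.sum_congr rfl; intro k _; ring
          _ = ∑ k, ∑ i, u k * (e k i * v i) := Finset.sum_comm
          _ = ∑ k, u k * (e.mulVec v) k := by
              apply Finset.sum_congr rfl; intro k _
              rw [Matrix.mulVec, dotProduct, Finset.mul_sum]
      have hw2 : 0 ≤ ∑ k, (e.mulVec v k) ^ 2 := Finset.sum_nonneg fun _ _ => sq_nonneg _
      have cs : s ≤ Real.sqrt (∑ k, (u k) ^ 2) * Real.sqrt (∑ k, (e.mulVec v k) ^ 2) := by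
        rw [key, ← Real.sqrt_mul (Finset.sum_nonneg fun _ _ => sq_nonneg _)]
        calc ∑ k, u k * (e.mulVec v) k ≤ |∑ k, u k * (e.mulVec v) k| := le_abs_self _
          _ = Real.sqrt ((∑ k, u k * (e.mulVec v) k) ^ 2) := (Real.sqrt_sq_eq_abs _).symm
          _ ≤ _ := Real.sqrt_le_sqrt (Finset.sum_mul_sq_le_sq_mul_sq _ _ _)
      have hmv : Real.sqrt (∑ k, (e.mulVec v k) ^ 2) ≤ specNorm e * Real.sqrt s := by
        simpa [hsdef] using mulVec_norm_le e v
      have hle : s ≤ specNorm e * Real.sqrt s := by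
        rw [hunorm, Real.sqrt_one, one_mul] at cs
        calc s ≤ _ := cs
          _ ≤ _ := hmv
      have hsq : Real.sqrt s ^ 2 = s := Real.sq_sqrt hsnn
      rcases eq_or_lt_of_le hsnn with h0 | h0
      · rw [← h0]; positivity
      · have hrt : 0 < Real.sqrt s := Real.sqrt_pos.mpr h0
        have h1 : Real.sqrt s ≤ specNorm e := by
          have : Real.sqrt s * Real.sqrt s ≤ specNorm e * Real.sqrt s := by
            nlinarith [hle, hsq]
          exact le_of_mul_le_mul_right this hrt
        calc s = Real.sqrt s ^ 2 := hsq.symm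
          _ ≤ specNorm e ^ 2 := pow_le_pow_left₀ hrt.le h1 2
      done
    have htot : frobNorm (eᵀ * U) ^ 2 ≤ (r : ℝ) * specNorm e ^ 2 := by
      rw [frobNorm_sq, Finset.sum_comm]
      calc ∑ j : Fin r, ∑ i, ((eᵀ * U) i j) ^ 2
          ≤ ∑ _j : Fin r, specNorm e ^ 2 := Finset.sum_le_sum fun j _ => col j
        _ = (r : ℝ) * specNorm e ^ 2 := by simp [mul_comm]
    have hrhs : 0 ≤ Real.sqrt r * specNorm e :=
      mul_nonneg (Real.sqrt_nonneg _) (specNorm_nonneg e)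
    apply le_of_pow_le_pow_left₀ two_ne_zero hrhs
    calc frobNorm (eᵀ * U) ^ 2 ≤ (r : ℝ) * specNorm e ^ 2 := htot
      _ = (Real.sqrt r * specNorm e) ^ 2 := by
          rw [mul_pow, Real.sq_sqrt (Nat.cast_nonneg r)]
  -- step 2 and conclusion
  have step2 : frobNorm (Wᵀ * U) ≤ frobNorm A + Real.sqrt r * specNorm e := by
    have hWU : Wᵀ * U = Aᵀ * U + eᵀ * U := by
      rw [hW, Matrix.transpose_add, Matrix.add_mul]
    rw [hWU]
    exact (frobNorm_add_le _ _).trans (add_le_add step3 step4)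
  rw [step1]
  have h1 : 0 ≤ frobNorm A + Real.sqrt r * specNorm e :=
    add_nonneg (frobNorm_nonneg A) (mul_nonneg (Real.sqrt_nonneg _) (specNorm_nonneg e))
  have h2 : frobNorm (Wᵀ * U) ^ 2 ≤ (frobNorm A + Real.sqrt r * specNorm e) ^ 2 :=
    pow_le_pow_left₀ (frobNorm_nonneg _) step2 2
  have hrs : Real.sqrt r ^ 2 = (r : ℝ) := Real.sq_sqrt (Nat.cast_nonneg r)
  nlinarith [h2, hrs]
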